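/- Let H be a group and H0 a normal subgroup of H of finite index, with quotient group G = H/H0 (a finite group). Let Γ be a group and suppose there exists an injective group homomorphism H0 → Γ. Then there exists an injective group homomorphism from H into the wreath product Γ ≀ G, i.e., into the semidirect product (G → Γ) ⋊ G where G acts on the direct product G → Γ by left translation. -/

import Mathlib

/-- The left-translation action of `G` on the direct product `G → Γ` of copies
of `Γ` indexed by `G`: `(g • f) x = f (g⁻¹ * x)`. -/
def leftTranslationAction (G Γ : Type*) [Group G] [Group Γ] :
    G →* MulAut (G → Γ) where
  toFun g :=
    { toFun := fun f x => f (g⁻¹ * x)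
      invFun := fun f x => f (g * x)
      left_inv := fun f => funext fun x => by simp [mul_assoc]
      right_inv := fun f => funext fun x => by simp [mul_assoc]
      map_mul' := fun f₁ f₂ => rfl }
  map_one' := by
    ext f x
    simp
  map_mul' := fun g₁ g₂ => by
    ext f x
    simp [mul_assoc]

/-- **Kaloujnine–Krasner embedding theorem.** If `H0` is a finite-index normal
subgroup of `H` with quotient `G = H ⧸ H0`, and `H0` embeds into a group `Γ`,
then `H` embeds into the (regular) wreath product `Γ ≀ G`, realized as the
semidirect product `(G → Γ) ⋊ G` for the left-translation action. -/
theorem kaloujnine_krasner_embedding {H Γ : Type*} [Group H] [Group Γ]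
    (H0 : Subgroup H) [H0.Normal] [H0.FiniteIndex]
    (ψ : H0 →* Γ) (hψ : Function.Injective ψ) :
    ∃ e : H →* ((H ⧸ H0 → Γ) ⋊[leftTranslationAction (H ⧸ H0) Γ] (H ⧸ H0)),
      Function.Injective e := by
  classical
  letI π := QuotientGroup.mk' H0
  let s : H ⧸ H0 → H := fun g => g.out
  have hs : ∀ g, π (s g) = g := fun g => QuotientGroup.out_eq' g
  have mem : ∀ (h : H) (g : H ⧸ H0), (s g)⁻¹ * h * s ((π h)⁻¹ * g) ∈ H0 := by
    intro h g
    rw [← QuotientGroup.eq_one_iff]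
    show π _ = 1
    rw [map_mul, map_mul, map_inv, hs, hs]
    group
  refine ⟨MonoidHom.mk' (fun h => ⟨fun g => ψ ⟨_, mem h g⟩, π h⟩) ?_, ?_⟩
  · intro h₁ h₂
    ext g
    · show ψ ⟨(s g)⁻¹ * (h₁ * h₂) * s ((π (h₁ * h₂))⁻¹ * g), _⟩ = _
      rw [SemidirectProduct.mul_left]
      show _ = ψ ⟨_, mem h₁ g⟩ * ψ ⟨_, mem h₂ ((π h₁)⁻¹ * g)⟩
      rw [← map_mul]
      congr 1
      ext
      show (s g)⁻¹ * (h₁ * h₂) * s ((π (h₁ * h₂))⁻¹ * g) =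
        ((s g)⁻¹ * h₁ * s ((π h₁)⁻¹ * g)) *
          ((s ((π h₁)⁻¹ * g))⁻¹ * h₂ * s ((π h₂)⁻¹ * ((π h₁)⁻¹ * g)))
      rw [map_mul]
      group
    · simp
  · rw [injective_iff_map_eq_one]
    intro h hh
    have hr : π h = 1 := congrArg SemidirectProduct.right hh
    have hl : ψ ⟨(s 1)⁻¹ * h * s ((π h)⁻¹ * 1), mem h 1⟩ = 1 :=
      congrFun (congrArg SemidirectProduct.left hh) 1
    rw [← map_one ψ] at hl
    have := hψ hl
    have h1 : (s 1)⁻¹ * h * s ((π h)⁻¹ * 1) = 1 := congrArg Subtype.val this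
    rw [hr] at h1
    have h2 : h = (s 1) * ((s 1)⁻¹ * h * s ((1:H ⧸ H0)⁻¹ * 1)) * (s 1)⁻¹ := by
      simp only [inv_one, one_mul]
      group
    rw [h1] at h2
    simpa using h2
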